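/- Let c, m be positive integers, Z a real m×c matrix, and L a real c×c matrix whose kernel (as the kernel of the linear map v ↦ L *ᵥ v) is one-dimensional. Suppose x₁*, x₂* : Fin m → ℝ are both positive and both satisfy L *ᵥ exp∘(Zᵀ *ᵥ log∘xᵢ*) = 0 (i = 1, 2). Then there exists β > 0 such that L * Matrix.diagonal (exp∘(Zᵀ *ᵥ log∘x₁*)) = β • (L * Matrix.diagonal (exp∘(Zᵀ *ᵥ log∘x₂*))). (The balanced Laplacian matrices associated with different complex-balanced equilibria of a connected network differ by a positive multiplicative constant.) -/
import Mathlib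

open Matrix

theorem balanced_laplacians_differ_by_positive_constant
    (c m : ℕ) (hc : 0 < c) (hm : 0 < m)
    (Z : Matrix (Fin m) (Fin c) ℝ)
    (L : Matrix (Fin c) (Fin c) ℝ)
    (hker : Module.finrank ℝ (LinearMap.ker L.mulVecLin) = 1)
    (x₁ x₂ : Fin m → ℝ) (hx₁ : ∀ k, 0 < x₁ k) (hx₂ : ∀ k, 0 < x₂ k)
    (hbal₁ : L *ᵥ (fun i => Real.exp ((Zᵀ *ᵥ (fun k => Real.log (x₁ k))) i)) = 0)
    (hbal₂ : L *ᵥ (fun i => Real.exp ((Zᵀ *ᵥ (fun k => Real.log (x₂ k))) i)) = 0) :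
    ∃ β : ℝ, 0 < β ∧
      L * Matrix.diagonal (fun i => Real.exp ((Zᵀ *ᵥ (fun k => Real.log (x₁ k))) i)) =
        β • (L * Matrix.diagonal (fun i => Real.exp ((Zᵀ *ᵥ (fun k => Real.log (x₂ k))) i))) := by
  set v₁ : Fin c → ℝ := fun i => Real.exp ((Zᵀ *ᵥ (fun k => Real.log (x₁ k))) i) with hv₁
  set v₂ : Fin c → ℝ := fun i => Real.exp ((Zᵀ *ᵥ (fun k => Real.log (x₂ k))) i) with hv₂
  have hm₁ : v₁ ∈ LinearMap.ker L.mulVecLin := by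
    simp [LinearMap.mem_ker, Matrix.mulVecLin_apply, hbal₁]
  have hm₂ : v₂ ∈ LinearMap.ker L.mulVecLin := by
    simp [LinearMap.mem_ker, Matrix.mulVecLin_apply, hbal₂]
  have hnz : (⟨v₂, hm₂⟩ : LinearMap.ker L.mulVecLin) ≠ 0 := by
    intro h
    have := congrFun (congrArg Subtype.val h) ⟨0, hc⟩
    exact (Real.exp_pos _).ne' this
  obtain ⟨β, hβ⟩ := (finrank_eq_one_iff_of_nonzero' _ hnz).mp hker ⟨v₁, hm₁⟩
  have hβv : β • v₂ = v₁ := congrArg Subtype.val hβ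
  have hβpos : 0 < β := by
    have h0 := congrFun hβv ⟨0, hc⟩
    have : β * v₂ ⟨0, hc⟩ = v₁ ⟨0, hc⟩ := h0
    nlinarith [Real.exp_pos ((Zᵀ *ᵥ (fun k => Real.log (x₂ k))) ⟨0, hc⟩),
      Real.exp_pos ((Zᵀ *ᵥ (fun k => Real.log (x₁ k))) ⟨0, hc⟩)]
  refine ⟨β, hβpos, ?_⟩
  ext i j
  have hj : v₁ j = β * v₂ j := (congrFun hβv j).symm
  simp [Matrix.mul_apply, Matrix.diagonal_apply, Matrix.smul_apply, hj]
  ring
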